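/- Let R be an integral domain, let a, b, c be invertible 2×2 matrices over R, and set t := a ⊗ b ⊗ c (an 8×8 matrix over R). Suppose that t fixes each of the four standard basis vectors e₁₁₁, e₁₂₂, e₂₁₂, e₂₂₁, i.e. t · e = e for e ∈ {e₁₁₁, e₁₂₂, e₂₁₂, e₂₂₁}. Then either t is the 8×8 identity matrix or t = D, where D is the diagonal matrix diag(1, −1, −1, 1, −1, 1, 1, −1) (that is, D · e_{ijk} = e_{ijk} when i + j + k is odd and D · e_{ijk} = −e_{ijk} when i + j + k is even). In particular the pointwise stabilizer of {e₁₁₁, e₁₂₂, e₂₁₂, e₂₂₁} among matrices of the form a ⊗ b ⊗ c has at most two elements. -/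
import Mathlib


open Matrix
open scoped Kronecker

/-- The standard basis vector `e_{ijk}` of `R⁸ ≅ R² ⊗ R² ⊗ R²` (indices written `1`, `2` in
the paper correspond to `0`, `1` in `Fin 2`). -/
def stdVec (R : Type*) [CommRing R] (i j k : Fin 2) : (Fin 2 × Fin 2) × Fin 2 → R :=
  Pi.single ((i, j), k) 1

/-- The diagonal matrix `D = diag(1, −1, −1, 1, −1, 1, 1, −1)`: it multiplies `e_{ijk}` by
`+1` when `i + j + k` is odd (in the paper's `{1,2}`-valued indices, i.e. when the sum of
the corresponding `Fin 2` values is even) and by `−1` otherwise. -/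
def signMatrix (R : Type*) [CommRing R] :
    Matrix ((Fin 2 × Fin 2) × Fin 2) ((Fin 2 × Fin 2) × Fin 2) R :=
  Matrix.diagonal fun p =>
    if (p.1.1.val + p.1.2.val + p.2.val) % 2 = 0 then 1 else -1

set_option maxHeartbeats 1600000 in
/-- Let `R` be an integral domain and `a, b, c` invertible `2×2` matrices
over `R`.  If `t = a ⊗ b ⊗ c` fixes each of `e₁₁₁, e₁₂₂, e₂₁₂, e₂₂₁`, then `t` is either the
identity or the diagonal matrix `D = diag(1, −1, −1, 1, −1, 1, 1, −1)`; in particular the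
pointwise stabilizer of these four vectors among matrices of the form `a ⊗ b ⊗ c` has at
most two elements. -/
theorem kronecker_stabilizer_eq_one_or_sign {R : Type*} [CommRing R] [IsDomain R]
    (a b c : Matrix (Fin 2) (Fin 2) R)
    (ha : IsUnit a.det) (hb : IsUnit b.det) (hc : IsUnit c.det)
    (h111 : ((a ⊗ₖ b) ⊗ₖ c) *ᵥ stdVec R 0 0 0 = stdVec R 0 0 0)
    (h122 : ((a ⊗ₖ b) ⊗ₖ c) *ᵥ stdVec R 0 1 1 = stdVec R 0 1 1)
    (h212 : ((a ⊗ₖ b) ⊗ₖ c) *ᵥ stdVec R 1 0 1 = stdVec R 1 0 1)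
    (h221 : ((a ⊗ₖ b) ⊗ₖ c) *ᵥ stdVec R 1 1 0 = stdVec R 1 1 0) :
    (a ⊗ₖ b) ⊗ₖ c = 1 ∨ (a ⊗ₖ b) ⊗ₖ c = signMatrix R := by
  unfold stdVec at h111 h122 h212 h221
  have h1 := congrFun h111 ((0,0),0)
  have z1 := congrFun h111 ((1,0),0)
  have z2 := congrFun h111 ((0,1),0)
  have z3 := congrFun h111 ((0,0),1)
  have h2 := congrFun h122 ((0,1),1)
  have z4 := congrFun h122 ((0,0),1)
  have z5 := congrFun h122 ((0,1),0)
  have h3 := congrFun h212 ((1,0),1)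
  have z6 := congrFun h212 ((0,0),1)
  have h4 := congrFun h221 ((1,1),0)
  simp [mulVec_single] at h1 z1 z2 z3 h2 z4 z5 h3 z6 h4
  -- nonvanishing
  have hA : a 0 0 ≠ 0 := fun h => by simp [h] at h1
  have hB : b 0 0 ≠ 0 := fun h => by simp [h] at h1
  have hC : c 0 0 ≠ 0 := fun h => by simp [h] at h1
  have hB' : b 1 1 ≠ 0 := fun h => by simp [h] at h2
  have hC' : c 1 1 ≠ 0 := fun h => by simp [h] at h2
  -- zero entries
  have za10 : a 1 0 = 0 := (z1.resolve_right hC).resolve_right hB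
  have zb10 : b 1 0 = 0 := ((z2.resolve_right hC).resolve_left hA)
  have zc10 : c 1 0 = 0 := (z3.resolve_left (fun h => h.elim hA hB))
  have zb01 : b 0 1 = 0 := ((z4.resolve_right hC').resolve_left hA)
  have zc01 : c 0 1 = 0 := (z5.resolve_left (fun h => h.elim hA hB'))
  have za01 : a 0 1 = 0 := ((z6.resolve_right hC').resolve_right hB)
  -- the scalar λ
  set l := a 0 0 * b 0 0 * c 1 1 with hl
  have hsq : l * l = 1 := by
    linear_combination (a 0 0 * b 1 1 * c 1 1 * (a 1 1 * b 0 0 * c 1 1) * (a 1 1 * b 1 1 * c 0 0)) * h1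
      + ((a 1 1 * b 0 0 * c 1 1) * (a 1 1 * b 1 1 * c 0 0)) * h2
      + (a 1 1 * b 1 1 * c 0 0) * h3
      + (1 - l^2 * (a 1 1 * b 1 1 * c 0 0) - l^2) * h4
  have e010 : l * (a 0 0 * b 1 1 * c 0 0) = 1 := by
    linear_combination (a 0 0 * b 1 1 * c 1 1) * h1 + h2
  have e100 : l * (a 1 1 * b 0 0 * c 0 0) = 1 := by
    linear_combination (a 1 1 * b 0 0 * c 1 1) * h1 + h3
  have e111 : l * (a 1 1 * b 1 1 * c 1 1) = 1 := by
    linear_combination (a 1 1 * b 0 0 * c 1 1) * h2 + h3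
  have d010 : a 0 0 * b 1 1 * c 0 0 = l := by
    linear_combination l * e010 - (a 0 0 * b 1 1 * c 0 0) * hsq
  have d100 : a 1 1 * b 0 0 * c 0 0 = l := by
    linear_combination l * e100 - (a 1 1 * b 0 0 * c 0 0) * hsq
  have d111 : a 1 1 * b 1 1 * c 1 1 = l := by
    linear_combination l * e111 - (a 1 1 * b 1 1 * c 1 1) * hsq
  rcases mul_self_eq_one_iff.mp hsq with h | h
  · left
    rw [h] at hl d010 d100 d111
    ext ⟨⟨i,j⟩,k⟩ ⟨⟨i',j'⟩,k'⟩
    fin_cases i <;> fin_cases j <;> fin_cases k <;> fin_cases i' <;> fin_cases j' <;> fin_cases k' <;>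
      simp (config := { decide := true }) [Matrix.one_apply, za10, za01, zb10, zb01, zc10, zc01] <;>
      first
        | linear_combination h1
        | linear_combination h2
        | linear_combination h3
        | linear_combination h4
        | linear_combination hl.symm
        | linear_combination d010
        | linear_combination d100
        | linear_combination d111
  · right
    rw [h] at hl d010 d100 d111
    ext ⟨⟨i,j⟩,k⟩ ⟨⟨i',j'⟩,k'⟩
    fin_cases i <;> fin_cases j <;> fin_cases k <;> fin_cases i' <;> fin_cases j' <;> fin_cases k' <;>
      simp (config := { decide := true }) [signMatrix, Matrix.diagonal_apply, za10, za01, zb10, zb01, zc10, zc01] <;>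
      first
        | linear_combination h1
        | linear_combination h2
        | linear_combination h3
        | linear_combination h4
        | linear_combination hl.symm
        | linear_combination d010
        | linear_combination d100
        | linear_combination d111
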